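/- arXiv:2303.00058 — 2 statements merged into one kernel-verified Lean document; each statement's English description precedes it below -/
import Mathlib

section
/- Let A ∈ ℝ₊^{r×s} have full column rank and let N be a bounded neighborhood of A whose closure consists of full-column-rank nonnegative matrices. Then there exists a constant J₁ such that for every A' in the closure of N and every nonempty index set T ⊆ {1,…,s}, the spectral norm of (A'_{:,T})† is at most J₁; consequently ‖q(A', x')‖ ≤ J₁‖x'‖ for all A' ∈ N and x' ∈ ℝ₊^r. -/
open Matrix

/-- Moore–Penrose pseudoinverse of a full-column-rank real matrix. -/
noncomputable def pinv {m n : Type*} [Fintype m] [Fintype n] [DecidableEq n]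
    (A : Matrix m n ℝ) : Matrix n m ℝ := (Aᵀ * A)⁻¹ * Aᵀ

/-- Spectral (ℓ²-operator) norm of a real matrix. -/
noncomputable def specNorm {m n : Type*} [Fintype m] [Fintype n] [DecidableEq m]
    [DecidableEq n] (M : Matrix m n ℝ) : ℝ :=
  ‖LinearMap.toContinuousLinearMap (Matrix.toEuclideanLin M)‖

/-- Euclidean norm of a vector. -/
noncomputable def euclid {n : Type*} [Fintype n] (v : n → ℝ) : ℝ :=
  Real.sqrt (∑ i, v i ^ 2)

/-- `v` is the nonnegative least squares solution for `A`, `x`. -/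
def IsNNLS {r s : ℕ} (A : Matrix (Fin r) (Fin s) ℝ) (x : Fin r → ℝ) (v : Fin s → ℝ) : Prop :=
  (∀ j, 0 ≤ v j) ∧
    ∀ w : Fin s → ℝ, (∀ j, 0 ≤ w j) →
      ∑ i, (x i - A.mulVec v i) ^ 2 ≤ ∑ i, (x i - A.mulVec w i) ^ 2

lemma mulVec_inj_of_rank {r s : ℕ} (B : Matrix (Fin r) (Fin s) ℝ) (hB : B.rank = s) :
    Function.Injective B.mulVec := by
  have h1 : Module.finrank ℝ (LinearMap.range B.mulVecLin)
      + Module.finrank ℝ (LinearMap.ker B.mulVecLin) = s := by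
    rw [LinearMap.finrank_range_add_finrank_ker]
    simp [Module.finrank_fintype_fun_eq_card]
  have h2 : Module.finrank ℝ (LinearMap.ker B.mulVecLin) = 0 := by
    have : B.rank = Module.finrank ℝ (LinearMap.range B.mulVecLin) := rfl
    omega
  have h3 : LinearMap.ker B.mulVecLin = ⊥ := Submodule.finrank_eq_zero.mp h2
  have := LinearMap.ker_eq_bot.mp h3
  exact this

lemma submatrix_mulVec_ext {r s : ℕ} (B : Matrix (Fin r) (Fin s) ℝ) (T : Finset (Fin s))
    (u : {j // j ∈ T} → ℝ) :
    (B.submatrix id (Subtype.val : {j // j ∈ T} → Fin s)).mulVec u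
      = B.mulVec (fun j => if h : j ∈ T then u ⟨j, h⟩ else 0) := by
  funext i
  simp only [Matrix.mulVec, dotProduct, Matrix.submatrix_apply, id]
  have h1 : ∑ j ∈ T, B i j * (if h : j ∈ T then u ⟨j, h⟩ else 0)
      = ∑ j : Fin s, B i j * (if h : j ∈ T then u ⟨j, h⟩ else 0) := by
    refine Finset.sum_subset (Finset.subset_univ T) ?_
    intro j _ hj
    simp [hj]
  rw [← h1, ← Finset.sum_attach T (fun j => B i j * (if h : j ∈ T then u ⟨j, h⟩ else 0))]
  rw [Finset.univ_eq_attach]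
  refine Finset.sum_congr rfl ?_
  intro j _
  simp [j.2]

lemma gram_isUnit {r : ℕ} {m : Type*} [Fintype m] [DecidableEq m]
    (C : Matrix (Fin r) m ℝ) (hC : Function.Injective C.mulVec) :
    IsUnit (Cᵀ * C) := by
  rw [← Matrix.mulVec_injective_iff_isUnit]
  intro u u' h
  have hd : (Cᵀ * C).mulVec (u - u') = 0 := by
    have : (Cᵀ * C).mulVec u - (Cᵀ * C).mulVec u' = 0 := by rw [h]; simp
    rw [← this, ← Matrix.mulVec_sub]
  set d := u - u' with hdd
  have h1 : C.mulVec d ⬝ᵥ C.mulVec d = 0 := by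
    have : d ⬝ᵥ (Cᵀ * C).mulVec d = 0 := by rw [hd]; simp
    rwa [← Matrix.mulVec_mulVec, Matrix.dotProduct_mulVec, Matrix.vecMul_transpose] at this
  have h2 : C.mulVec d = 0 := dotProduct_self_eq_zero.mp h1
  have h3 : d = 0 := by
    apply hC
    rw [h2, Matrix.mulVec_zero]
  exact sub_eq_zero.mp h3

lemma stationarity {r s : ℕ} (B : Matrix (Fin r) (Fin s) ℝ) (x : Fin r → ℝ) (v : Fin s → ℝ)
    (hv0 : ∀ j, 0 ≤ v j)
    (hmin : ∀ w : Fin s → ℝ, (∀ j, 0 ≤ w j) →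
      ∑ i, (x i - B.mulVec v i) ^ 2 ≤ ∑ i, (x i - B.mulVec w i) ^ 2)
    (j : Fin s) (hj : 0 < v j) :
    ∑ i, B i j * (B.mulVec v i - x i) = 0 := by
  set g := ∑ i, B i j * (B.mulVec v i - x i) with hg
  set c := ∑ i, (B i j) ^ 2 with hc
  have hc0 : 0 ≤ c := Finset.sum_nonneg fun i _ => sq_nonneg _
  have key : ∀ t : ℝ, -v j ≤ t → 0 ≤ 2 * t * g + t ^ 2 * c := by
    intro t ht
    have hw0 : ∀ k, 0 ≤ (v + t • (Pi.single j 1 : Fin s → ℝ)) k := by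
      intro k
      by_cases hk : k = j
      · subst hk; simp; linarith
      · simp [Pi.single_apply, hk, hv0 k]
    have hmv : B.mulVec (v + t • (Pi.single j 1 : Fin s → ℝ))
        = fun i => B.mulVec v i + t * B i j := by
      rw [Matrix.mulVec_add, Matrix.mulVec_smul]
      funext i
      simp [Matrix.mulVec_single]
    have h := hmin _ hw0
    rw [hmv] at h
    have expand : ∑ i, (x i - (B.mulVec v i + t * B i j)) ^ 2
        = ∑ i, (x i - B.mulVec v i) ^ 2 + (2 * t * g + t ^ 2 * c) := by
      have e1 : ∀ i ∈ Finset.univ, (x i - (B.mulVec v i + t * B i j)) ^ 2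
          = (x i - B.mulVec v i) ^ 2
            + (2 * t * (B i j * (B.mulVec v i - x i)) + t ^ 2 * (B i j) ^ 2) := by
        intro i _; ring
      rw [Finset.sum_congr rfl e1, Finset.sum_add_distrib, Finset.sum_add_distrib,
        ← Finset.mul_sum, ← Finset.mul_sum, ← hg, ← hc]
    rw [expand] at h
    linarith
  by_contra hgne
  rcases lt_or_gt_of_ne hgne with hlt | hgt
  · set t := -g / (c + 1) with htdef
    have hc1 : (0:ℝ) < c + 1 := by linarith
    have ht0 : 0 < t := div_pos (by linarith) hc1
    have h1 : t * c ≤ -g := by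
      rw [htdef, div_mul_eq_mul_div, div_le_iff₀ hc1]
      nlinarith
    have := key t (by linarith)
    nlinarith
  · set m := min (v j) (g / (c + 1)) with hmdef
    have hc1 : (0:ℝ) < c + 1 := by linarith
    have hm0 : 0 < m := lt_min hj (by positivity)
    have ht : -v j ≤ -m := by simp [hmdef]
    have h1 : m * c ≤ g := by
      have h2 : m ≤ g / (c + 1) := min_le_right _ _
      have h3 : m * c ≤ (g / (c + 1)) * c := by nlinarith
      have h4 : (g / (c + 1)) * c ≤ g := by
        rw [div_mul_eq_mul_div, div_le_iff₀ hc1]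
        nlinarith
      linarith
    have := key (-m) ht
    nlinarith

lemma specNorm_continuous {m n : Type*} [Fintype m] [Fintype n] [DecidableEq m] [DecidableEq n] :
    Continuous (specNorm : Matrix m n ℝ → ℝ) := by
  let L := ((LinearMap.toContinuousLinearMap
      (𝕜 := ℝ) (E := EuclideanSpace ℝ n) (F' := EuclideanSpace ℝ m)).toLinearMap.comp
    (Matrix.toEuclideanLin (𝕜 := ℝ) (m := m) (n := n)).toLinearMap)
  have hL : Continuous L := L.continuous_of_finiteDimensional
  have he : (specNorm : Matrix m n ℝ → ℝ) = fun M => ‖L M‖ := rfl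
  rw [he]
  exact continuous_norm.comp hL

lemma specNorm_nonneg {m n : Type*} [Fintype m] [Fintype n] [DecidableEq m] [DecidableEq n]
    (M : Matrix m n ℝ) : 0 ≤ specNorm M := norm_nonneg _

lemma euclid_eq_norm {n : Type*} [Fintype n] (v : n → ℝ) :
    euclid v = ‖(WithLp.equiv 2 (n → ℝ)).symm v‖ := by
  rw [EuclideanSpace.norm_eq, euclid]
  congr 1
  refine Finset.sum_congr rfl fun i _ => ?_
  simp [Real.norm_eq_abs, sq_abs]

/-- a uniform bound `J₁` on the spectral norms of the pseudoinverses of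
all column submatrices over the closure of a bounded neighborhood `N`; consequently
`‖q(A',x')‖ ≤ J₁ ‖x'‖` for `A' ∈ N` and nonnegative `x'`. -/
theorem uniform_pinv_bound {r s : ℕ} (hrs : s ≤ r)
    (Q : (Fin r → Fin s → ℝ) → (Fin r → ℝ) → (Fin s → ℝ))
    (hQ : ∀ B y, (∀ i j, 0 ≤ B i j) → (∀ i, 0 ≤ y i) → (Matrix.of B).rank = s →
      IsNNLS (Matrix.of B) y (Q B y))
    (A : Fin r → Fin s → ℝ) (hA0 : ∀ i j, 0 ≤ A i j) (hArank : (Matrix.of A).rank = s)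
    (N : Set (Fin r → Fin s → ℝ)) (hN : N ∈ nhds A) (hNbd : Bornology.IsBounded N)
    (hNcl : ∀ B ∈ closure N, (∀ i j, 0 ≤ B i j) ∧ (Matrix.of B).rank = s) :
    ∃ J₁ : ℝ,
      (∀ B ∈ closure N, ∀ T : Finset (Fin s), T.Nonempty →
        specNorm (pinv ((Matrix.of B).submatrix id
          (Subtype.val : {j // j ∈ T} → Fin s))) ≤ J₁) ∧
      ∀ B ∈ N, ∀ x : Fin r → ℝ, (∀ i, 0 ≤ x i) → euclid (Q B x) ≤ J₁ * euclid x := by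
  classical
  have hcomp : IsCompact (closure N) := hNbd.isCompact_closure
  have hAmem : A ∈ N := mem_of_mem_nhds hN
  have hne : (closure N).Nonempty := ⟨A, subset_closure hAmem⟩
  have hinj : ∀ B ∈ closure N, ∀ T : Finset (Fin s),
      Function.Injective
        ((Matrix.of B).submatrix id (Subtype.val : {j // j ∈ T} → Fin s)).mulVec := by
    intro B hB T u u' huu
    have hBinj := mulVec_inj_of_rank (Matrix.of B) (hNcl B hB).2
    rw [submatrix_mulVec_ext, submatrix_mulVec_ext] at huu
    have h := hBinj huu
    funext j'
    have := congrFun h j'.val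
    simpa [j'.2] using this
  have hdet : ∀ B ∈ closure N, ∀ T : Finset (Fin s),
      (((Matrix.of B).submatrix id (Subtype.val : {j // j ∈ T} → Fin s))ᵀ
        * (Matrix.of B).submatrix id (Subtype.val : {j // j ∈ T} → Fin s)).det ≠ 0 := by
    intro B hB T
    have := (Matrix.isUnit_iff_isUnit_det _).mp (gram_isUnit _ (hinj B hB T))
    exact this.ne_zero
  set f : (Fin r → Fin s → ℝ) → ℝ := fun B => ∑ T : Finset (Fin s),
    specNorm (pinv ((Matrix.of B).submatrix id (Subtype.val : {j // j ∈ T} → Fin s))) with hf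
  have hfc : ContinuousOn f (closure N) := by
    refine continuousOn_finset_sum _ (fun T _ => ?_)
    set Cm : (Fin r → Fin s → ℝ) → Matrix (Fin r) {j // j ∈ T} ℝ :=
      fun B => (Matrix.of B).submatrix id Subtype.val with hCm
    have hC : Continuous Cm :=
      (continuous_id : Continuous fun B : Fin r → Fin s → ℝ => Matrix.of B).matrix_submatrix _ _
    have hG : Continuous fun B => (Cm B)ᵀ * Cm B := (hC.matrix_transpose).matrix_mul hC
    have hd : Continuous fun B => ((Cm B)ᵀ * Cm B).det := hG.matrix_det
    have hinv : ContinuousOn (fun B => ((Cm B)ᵀ * Cm B)⁻¹) (closure N) := by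
      have heq : (fun B => ((Cm B)ᵀ * Cm B)⁻¹)
          = fun B => (((Cm B)ᵀ * Cm B).det)⁻¹ • ((Cm B)ᵀ * Cm B).adjugate := by
        funext B
        rw [Matrix.inv_def, Ring.inverse_eq_inv']
      rw [heq]
      exact ContinuousOn.smul (hd.continuousOn.inv₀ (fun B hB => hdet B hB T))
        hG.matrix_adjugate.continuousOn
    have hmulc : Continuous fun p : (Matrix {j // j ∈ T} {j // j ∈ T} ℝ)
        × (Matrix {j // j ∈ T} (Fin r) ℝ) => p.1 * p.2 :=
      (continuous_fst : Continuous fun p : (Matrix {j // j ∈ T} {j // j ∈ T} ℝ)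
        × (Matrix {j // j ∈ T} (Fin r) ℝ) => p.1).matrix_mul continuous_snd
    have hpinv : ContinuousOn (fun B => pinv (Cm B)) (closure N) := by
      have : ContinuousOn (fun B => ((Cm B)ᵀ * Cm B)⁻¹ * (Cm B)ᵀ) (closure N) :=
        hmulc.comp_continuousOn (f := fun B => (((Cm B)ᵀ * Cm B)⁻¹, (Cm B)ᵀ))
          (hinv.prodMk (hC.matrix_transpose.continuousOn))
      exact this
    exact specNorm_continuous.comp_continuousOn hpinv
  obtain ⟨B₀, hB₀, hmax'⟩ := hcomp.exists_isMaxOn hne hfc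
  have hmax : ∀ B ∈ closure N, f B ≤ f B₀ := fun B hB => hmax' hB
  have hpart1 : ∀ B ∈ closure N, ∀ T : Finset (Fin s),
      specNorm (pinv ((Matrix.of B).submatrix id
        (Subtype.val : {j // j ∈ T} → Fin s))) ≤ f B₀ := by
    intro B hB T
    refine le_trans ?_ (hmax B hB)
    exact Finset.single_le_sum
      (f := fun T' : Finset (Fin s) => specNorm (pinv ((Matrix.of B).submatrix id
        (Subtype.val : {j // j ∈ T'} → Fin s))))
      (fun T' _ => specNorm_nonneg _) (Finset.mem_univ T)
  have hJ0 : 0 ≤ f B₀ :=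
    le_trans (specNorm_nonneg _) (hpart1 A (subset_closure hAmem) ∅)
  refine ⟨f B₀, fun B hB T _ => hpart1 B hB T, ?_⟩
  intro B hBN x hx
  have hBcl : B ∈ closure N := subset_closure hBN
  obtain ⟨hB0, hBrank⟩ := hNcl B hBcl
  obtain ⟨hv0, hmin⟩ := hQ B x hB0 hx hBrank
  set v := Q B x with hv
  set T : Finset (Fin s) := Finset.univ.filter (fun j => v j ≠ 0) with hT
  have hvT : ∀ j, j ∉ T → v j = 0 := by
    intro j hj
    by_contra hne'
    exact hj (Finset.mem_filter.mpr ⟨Finset.mem_univ j, hne'⟩)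
  by_cases hTne : T.Nonempty
  · -- main case
    set C : Matrix (Fin r) {j // j ∈ T} ℝ :=
      (Matrix.of B).submatrix id (Subtype.val : {j // j ∈ T} → Fin s) with hC
    set vT : {j // j ∈ T} → ℝ := fun j' => v j'.val with hvTdef
    have hvext : (fun j => if h : j ∈ T then vT ⟨j, h⟩ else 0) = v := by
      funext j
      by_cases hj : j ∈ T
      · simp [hj, hvTdef]
      · simp [hj, hvT j hj]
    have hCv : C.mulVec vT = (Matrix.of B).mulVec v := by
      rw [hC, submatrix_mulVec_ext, hvext]
    have hstat : Cᵀ.mulVec (C.mulVec vT) = Cᵀ.mulVec x := by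
      funext j'
      have hpos : 0 < v j'.val := by
        have := (Finset.mem_filter.mp j'.2).2
        exact lt_of_le_of_ne (hv0 j'.val) (Ne.symm this)
      have h0 := stationarity (Matrix.of B) x v hv0 hmin j'.val hpos
      have e1 : (Cᵀ.mulVec (C.mulVec vT)) j' = ∑ i, C i j' * ((Matrix.of B).mulVec v i) := by
        rw [hCv]; rfl
      have e2 : (Cᵀ.mulVec x) j' = ∑ i, C i j' * x i := rfl
      rw [e1, e2]
      have hsub : ∑ i, C i j' * ((Matrix.of B).mulVec v i)
          - ∑ i, C i j' * x i = 0 := by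
        rw [← Finset.sum_sub_distrib]
        rw [← h0]
        refine Finset.sum_congr rfl fun i _ => ?_
        simp only [hC, Matrix.submatrix_apply, id]
        ring
      linarith [hsub]
    have hdetC : (Cᵀ * C).det ≠ 0 := hdet B hBcl T
    have hvT_eq : vT = (pinv C).mulVec x := by
      rw [pinv, ← Matrix.mulVec_mulVec, ← hstat, Matrix.mulVec_mulVec,
        Matrix.mulVec_mulVec, Matrix.mul_assoc, Matrix.nonsing_inv_mul _ (isUnit_iff_ne_zero.mpr hdetC),
        Matrix.one_mulVec]
    -- norms
    have hev : euclid v = euclid vT := by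
      rw [euclid, euclid]
      congr 1
      have h1 : ∑ j : Fin s, v j ^ 2 = ∑ j ∈ T, v j ^ 2 := by
        symm
        refine Finset.sum_subset (Finset.subset_univ T) ?_
        intro j _ hj
        simp [hvT j hj]
      rw [h1, ← Finset.sum_attach T (fun j => v j ^ 2), Finset.univ_eq_attach]
    have hbound : euclid vT ≤ specNorm (pinv C) * euclid x := by
      rw [euclid_eq_norm, euclid_eq_norm]
      have heq : (WithLp.equiv 2 ({j // j ∈ T} → ℝ)).symm vT
          = (LinearMap.toContinuousLinearMap (Matrix.toEuclideanLin (pinv C)))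
            ((WithLp.equiv 2 (Fin r → ℝ)).symm x) := by
        rw [hvT_eq]
        simp only [LinearMap.coe_toContinuousLinearMap']
        exact (Matrix.toEuclideanLin_apply_piLp_toLp (pinv C) x).symm
      rw [heq]
      exact ContinuousLinearMap.le_opNorm _ _
    have hsn : specNorm (pinv C) ≤ f B₀ := hpart1 B hBcl T
    have hex : 0 ≤ euclid x := Real.sqrt_nonneg _
    calc euclid v = euclid vT := hev
      _ ≤ specNorm (pinv C) * euclid x := hbound
      _ ≤ f B₀ * euclid x := mul_le_mul_of_nonneg_right hsn hex
  · -- T empty: v = 0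
    have hvz : ∀ j, v j = 0 := by
      intro j
      by_contra hne'
      exact hTne ⟨j, Finset.mem_filter.mpr ⟨Finset.mem_univ j, hne'⟩⟩
    have : euclid v = 0 := by
      rw [euclid]
      have : ∑ j, v j ^ 2 = 0 := Finset.sum_eq_zero fun j _ => by rw [hvz j]; ring
      rw [this, Real.sqrt_zero]
    rw [this]
    exact mul_nonneg hJ0 (Real.sqrt_nonneg _)
end

section
/- Chained support Jacobian: let S⁽⁰⁾ = q(A⁽⁰⁾, X_{:,m}) and S⁽ℓ⁾ = q(A⁽ℓ⁾, S⁽ℓ⁻¹⁾) column-wise, with every pair (A⁽ℓ⁾, S⁽ℓ⁻¹⁾_{:,m}) in the locally-constant-support set U. Let T_m⁽ℓ⁾ = supp S⁽ℓ⁾_{:,m}. Then the Jacobian of S⁽ℓ₂⁾_{:,m} with respect to S⁽ℓ₁⁾_{:,m} has rows indexed by T_m⁽ℓ₂⁾ equal to the product Φ = (A⁽ℓ₂⁾_{:,T_m⁽ℓ₂⁾}†)_{:,T_m⁽ℓ₂⁻¹⁾} (A⁽ℓ₂⁻¹⁾_{:,T_m⁽ℓ₂⁻¹⁾}†)_{:,T_m⁽ℓ₂⁻²⁾}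 ⋯ (A⁽ℓ₁⁺¹⁾_{:,T_m⁽ℓ₁⁺¹⁾}†), and rows outside T_m⁽ℓ₂⁾ equal to zero. -/
open Matrix

/-- The composite forward map from `S`-layer `ℓ` to `S`-layer `ℓ + t`, where
`QA ℓ' = q(A^{(ℓ')}, ·)` is the layer-`ℓ'` NNLS map. -/
noncomputable def iter {d : ℕ → ℕ}
    (QA : (ℓ : ℕ) → (Fin (d ℓ) → ℝ) → (Fin (d (ℓ + 1)) → ℝ)) (ℓ : ℕ) :
    (t : ℕ) → (Fin (d (ℓ + 1)) → ℝ) → (Fin (d (ℓ + t + 1)) → ℝ)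
  | 0, y => y
  | t + 1, y => QA (ℓ + t + 1) (iter QA ℓ t y)

/-- The matrix `Φ^{(ℓ+1, ℓ+t+1)}`: product of support-restricted pseudoinverses
`(A^{(ℓ+t+1)}_{:,T^{(ℓ+t+1)}}†)_{:,T^{(ℓ+t)}} ⋯ (A^{(ℓ+1)}_{:,T^{(ℓ+1)}}†)`. -/
noncomputable def Phi {d : ℕ → ℕ}
    (A : (ℓ : ℕ) → Matrix (Fin (d ℓ)) (Fin (d (ℓ + 1))) ℝ)
    (Ts : (ℓ : ℕ) → Finset (Fin (d (ℓ + 1)))) (ℓ : ℕ) :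
    (t : ℕ) → Matrix {j // j ∈ Ts (ℓ + t + 1)} (Fin (d (ℓ + 1))) ℝ
  | 0 => pinv ((A (ℓ + 1)).submatrix id
      (Subtype.val : {j // j ∈ Ts (ℓ + 1)} → Fin (d (ℓ + 2))))
  | t + 1 =>
      ((pinv ((A (ℓ + t + 2)).submatrix id
          (Subtype.val : {j // j ∈ Ts (ℓ + t + 2)} → Fin (d (ℓ + t + 3))))).submatrix id
        (Subtype.val : {j // j ∈ Ts (ℓ + t + 1)} → Fin (d (ℓ + t + 2)))) * Phi A Ts ℓ t

lemma rank_full_inj {r s : ℕ} (M : Matrix (Fin r) (Fin s) ℝ) (h : M.rank = s) :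
    Function.Injective M.mulVec := by
  have h1 := LinearMap.finrank_range_add_finrank_ker M.mulVecLin
  rw [Matrix.rank] at h
  have hdom : Module.finrank ℝ (Fin s → ℝ) = s := by simp
  rw [h, hdom] at h1
  have hker : Module.finrank ℝ (LinearMap.ker M.mulVecLin) = 0 := by omega
  have : LinearMap.ker M.mulVecLin = ⊥ := Submodule.finrank_eq_zero.mp hker
  have := LinearMap.ker_eq_bot.mp this
  simpa only [Matrix.coe_mulVecLin] using this

lemma gram_inv_mul {r : ℕ} {s' : Type*} [Fintype s'] [DecidableEq s']
    (M : Matrix (Fin r) s' ℝ) (h : Function.Injective M.mulVec) :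
    (Mᵀ * M)⁻¹ * (Mᵀ * M) = 1 := by
  apply Matrix.nonsing_inv_mul
  rw [isUnit_iff_ne_zero]
  intro hdet
  obtain ⟨v, hv, hv0⟩ := (Matrix.exists_mulVec_eq_zero_iff).mpr hdet
  have : v ⬝ᵥ (Mᵀ * M).mulVec v = 0 := by rw [hv0]; simp
  rw [← Matrix.mulVec_mulVec, Matrix.dotProduct_mulVec, Matrix.vecMul_transpose] at this
  have hMv : M.mulVec v = 0 := by
    have : ∑ i, (M.mulVec v i) ^2 = 0 := by
      simpa [dotProduct, pow_two] using this
    funext i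
    have := (Finset.sum_eq_zero_iff_of_nonneg (fun i _ => sq_nonneg (M.mulVec v i))).mp this i (Finset.mem_univ i)
    exact pow_eq_zero_iff (n := 2) (by norm_num) |>.mp this
  have : v = 0 := by
    apply h
    simpa using hMv
  exact hv this

lemma nnls_stationary {r s : ℕ} (B : Matrix (Fin r) (Fin s) ℝ) (y : Fin r → ℝ)
    (v : Fin s → ℝ) (hv : IsNNLS B y v) (k : Fin s) (hk : 0 < v k) :
    ∑ i, B i k * (y i - B.mulVec v i) = 0 := by
  set c := ∑ i, B i k * (y i - B.mulVec v i) with hc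
  set n := ∑ i, (B i k) ^ 2 with hn
  have hn0 : 0 ≤ n := Finset.sum_nonneg fun i _ => sq_nonneg _
  have key : ∀ ε : ℝ, -v k ≤ ε → 0 ≤ -2 * ε * c + ε ^ 2 * n := by
    intro ε hε
    set w := Function.update v k (v k + ε) with hw
    have hw0 : ∀ j, 0 ≤ w j := by
      intro j
      rcases eq_or_ne j k with rfl | hne
      · simp [hw]; linarith
      · simp [hw, Function.update_of_ne hne]; exact hv.1 j
    have hmul : ∀ i, B.mulVec w i = B.mulVec v i + ε * B i k := by
      intro i
      simp only [Matrix.mulVec, dotProduct, hw]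
      rw [show ∑ j, B i j * Function.update v k (v k + ε) j
          = ∑ j, (B i j * v j + if j = k then B i j * ε else 0) by
        apply Finset.sum_congr rfl
        intro j _
        rcases eq_or_ne j k with rfl | hne
        · simp [Function.update_self]; ring
        · simp [Function.update_of_ne hne, hne]]
      rw [Finset.sum_add_distrib, Finset.sum_ite_eq' Finset.univ k (fun j => B i j * ε)]
      simp [mul_comm]
    have hle := hv.2 w hw0
    have expand : ∑ i, (y i - B.mulVec w i) ^ 2
        = ∑ i, (y i - B.mulVec v i) ^ 2 + (-2 * ε * c + ε ^ 2 * n) := by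
      rw [hc, hn, Finset.mul_sum, Finset.mul_sum, ← Finset.sum_add_distrib,
        ← Finset.sum_add_distrib]
      apply Finset.sum_congr rfl
      intro i _
      rw [hmul i]
      ring
    rw [expand] at hle
    linarith
  by_contra hcne
  have hc2 : 0 < c ^ 2 := by positivity
  set δ := min (v k / |c|) (1 / (n + 1)) with hδ
  have habs : 0 < |c| := abs_pos.mpr hcne
  have hδ0 : 0 < δ := by
    apply lt_min
    · positivity
    · positivity
  have hδn : δ * n < 2 := by
    have h1 : δ ≤ 1 / (n + 1) := min_le_right _ _
    have : δ * n ≤ (1 / (n + 1)) * n := by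
      apply mul_le_mul_of_nonneg_right h1 hn0
    have h2 : (1 / (n + 1)) * n < 1 := by
      rw [div_mul_eq_mul_div, div_lt_one (by linarith)]
      linarith
    linarith
  have hεok : -v k ≤ c * δ := by
    have h1 : δ ≤ v k / |c| := min_le_left _ _
    have h2 : |c * δ| ≤ v k := by
      rw [abs_mul, abs_of_pos hδ0]
      calc |c| * δ ≤ |c| * (v k / |c|) := by
            apply mul_le_mul_of_nonneg_left h1 (le_of_lt habs)
        _ = v k := by field_simp
    have := neg_abs_le (c * δ)
    linarith [abs_nonneg (c*δ)]
  have := key (c * δ) hεok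
  nlinarith [mul_pos hc2 hδ0]

lemma submatrix_mulVec_eq {r s : ℕ} (B : Matrix (Fin r) (Fin s) ℝ) (T : Finset (Fin s))
    (u : {j // j ∈ T} → ℝ) :
    (B.submatrix id (Subtype.val : {j // j ∈ T} → Fin s)).mulVec u
      = B.mulVec (fun j => if hj : j ∈ T then u ⟨j, hj⟩ else 0) := by
  funext i
  simp only [Matrix.mulVec, dotProduct, Matrix.submatrix_apply, id]
  rw [show (∑ j, B i j * if hj : j ∈ T then u ⟨j, hj⟩ else 0)
      = ∑ j ∈ T, B i j * (if hj : j ∈ T then u ⟨j, hj⟩ else 0) by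
    rw [Finset.sum_subset (Finset.subset_univ T)]
    intro j _ hj
    simp [hj]]
  rw [← Finset.sum_coe_sort T]
  apply Finset.sum_congr rfl
  intro j _
  simp

lemma submatrix_inj {r s : ℕ} (B : Matrix (Fin r) (Fin s) ℝ) (hrank : B.rank = s)
    (T : Finset (Fin s)) :
    Function.Injective (B.submatrix id (Subtype.val : {j // j ∈ T} → Fin s)).mulVec := by
  intro u u' huu
  rw [submatrix_mulVec_eq, submatrix_mulVec_eq] at huu
  have := rank_full_inj B hrank huu
  funext j
  have h2 := congrFun this j.1
  simpa [j.2] using h2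

lemma nnls_formula {r s : ℕ} (B : Matrix (Fin r) (Fin s) ℝ) (y : Fin r → ℝ) (v : Fin s → ℝ)
    (hrank : B.rank = s) (hv : IsNNLS B y v) (T : Finset (Fin s))
    (hT : ∀ j, j ∈ T ↔ 0 < v j) :
    v = fun j => if hj : j ∈ T then
      (pinv (B.submatrix id (Subtype.val : {j // j ∈ T} → Fin s))).mulVec y ⟨j, hj⟩ else 0 := by
  set BT := B.submatrix id (Subtype.val : {j // j ∈ T} → Fin s) with hBT
  set vT : {j // j ∈ T} → ℝ := fun j => v j.1 with hvT
  have hvoff : ∀ j, j ∉ T → v j = 0 := by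
    intro j hj
    have := hv.1 j
    have h2 := (hT j).not.mp hj
    by_contra hne
    exact hj ((hT j).mpr (lt_of_le_of_ne this (Ne.symm hne)))
  have hmv : B.mulVec v = BT.mulVec vT := by
    rw [submatrix_mulVec_eq]
    have hveq : v = (fun j => if hj : j ∈ T then vT ⟨j, hj⟩ else 0) := by
      funext j
      by_cases hj : j ∈ T
      · simp [hj, hvT]
      · simp [hj, hvoff j hj]
    rw [← hveq]
  have hstat : ∀ k : {j // j ∈ T}, ∑ i, BT i k * (y i - BT.mulVec vT i) = 0 := by
    intro k
    have := nnls_stationary B y v hv k.1 ((hT k.1).mp k.2)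
    rw [hmv] at this
    simpa [hBT] using this
  have hgram : (BTᵀ * BT).mulVec vT = BTᵀ.mulVec y := by
    funext k
    have := hstat k
    simp only [Matrix.mulVec, dotProduct, Matrix.mul_apply, Matrix.transpose_apply]
    have expand : ∑ i, BT i k * (y i - BT.mulVec vT i)
        = ∑ i, BT i k * y i - ∑ i, BT i k * (BT.mulVec vT i) := by
      rw [← Finset.sum_sub_distrib]
      apply Finset.sum_congr rfl
      intro i _
      ring
    rw [expand] at this
    have heq : ∑ i, BT i k * y i = ∑ i, BT i k * (BT.mulVec vT i) := by linarith
    rw [heq]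
    rw [show ∑ j, (∑ i, BT i k * BT i j) * vT j = ∑ j, ∑ i, BT i k * BT i j * vT j by
      apply Finset.sum_congr rfl; intro j _; rw [Finset.sum_mul]]
    rw [Finset.sum_comm]
    apply Finset.sum_congr rfl
    intro i _
    simp only [Matrix.mulVec, dotProduct, Finset.mul_sum]
    apply Finset.sum_congr rfl
    intro j _
    ring
  have hinj := submatrix_inj B hrank T
  have hG := gram_inv_mul BT hinj
  have hvTeq : vT = (pinv BT).mulVec y := by
    have : (BTᵀ * BT)⁻¹.mulVec ((BTᵀ * BT).mulVec vT) = (BTᵀ * BT)⁻¹.mulVec (BTᵀ.mulVec y) := by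
      rw [hgram]
    rw [Matrix.mulVec_mulVec, Matrix.mulVec_mulVec, hG, Matrix.one_mulVec] at this
    rw [this, pinv, ← Matrix.mulVec_mulVec]
  funext j
  by_cases hj : j ∈ T
  · simp only [hj, dif_pos]
    rw [← hvTeq]
  · simp [hj, hvoff j hj]

lemma single_layer {r s : ℕ} (B : Matrix (Fin r) (Fin s) ℝ)
    (hBrank : B.rank = s)
    (Q : (Fin r → ℝ) → (Fin s → ℝ))
    (hQ : ∀ y, (∀ i, 0 ≤ y i) → IsNNLS B y (Q y))
    (x0 : Fin r → ℝ) (hx00 : ∀ i, 0 ≤ x0 i)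
    (T : Finset (Fin s))
    (hT : ∀ j, j ∈ T ↔ 0 < Q x0 j)
    (N : Set (Fin r → ℝ)) (hN : IsOpen N) (hx0N : x0 ∈ N)
    (hsupp : ∀ y ∈ N, (∀ i, 0 ≤ y i) → {j | 0 < Q y j} = {j | 0 < Q x0 j})
    (J1 : Matrix (Fin s) (Fin r) ℝ)
    (hJ1 : ∀ j i, J1 j i = if hj : j ∈ T then
      pinv (B.submatrix id (Subtype.val : {j // j ∈ T} → Fin s)) ⟨j, hj⟩ i else 0) :
    HasFDerivWithinAt Q (Matrix.mulVecLin J1).toContinuousLinearMap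
      {y : Fin r → ℝ | ∀ i, 0 ≤ y i} x0 := by
  have hlin : ∀ y ∈ N ∩ {y : Fin r → ℝ | ∀ i, 0 ≤ y i}, Q y = J1.mulVec y := by
    rintro y ⟨hyN, hy0⟩
    have hTy : ∀ j, j ∈ T ↔ 0 < Q y j := by
      intro j
      have := hsupp y hyN hy0
      rw [hT j]
      constructor
      · intro h; exact (Set.ext_iff.mp this j).mpr h
      · intro h; exact (Set.ext_iff.mp this j).mp h
    have hform := nnls_formula B y (Q y) hBrank (hQ y hy0) T hTy
    rw [hform]
    funext j
    by_cases hj : j ∈ T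
    · simp only [hj, dif_pos]
      simp only [Matrix.mulVec, dotProduct]
      apply Finset.sum_congr rfl
      intro i _
      rw [hJ1 j i]
      simp [hj]
    · simp only [hj, dif_neg, not_false_iff]
      simp only [Matrix.mulVec, dotProduct]
      symm
      apply Finset.sum_eq_zero
      intro i _
      rw [hJ1 j i]
      simp [hj]
  have hmem : N ∩ {y : Fin r → ℝ | ∀ i, 0 ≤ y i}
      ∈ nhdsWithin x0 {y : Fin r → ℝ | ∀ i, 0 ≤ y i} :=
    Filter.inter_mem (mem_nhdsWithin_of_mem_nhds (hN.mem_nhds hx0N)) self_mem_nhdsWithin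
  have hev : Q =ᶠ[nhdsWithin x0 {y : Fin r → ℝ | ∀ i, 0 ≤ y i}]
      fun y => (Matrix.mulVecLin J1).toContinuousLinearMap y := by
    apply Filter.eventuallyEq_of_mem hmem
    intro y hy
    simpa using hlin y hy
  have hbase : HasFDerivWithinAt (fun y => (Matrix.mulVecLin J1).toContinuousLinearMap y)
      (Matrix.mulVecLin J1).toContinuousLinearMap {y : Fin r → ℝ | ∀ i, 0 ≤ y i} x0 :=
    (Matrix.mulVecLin J1).toContinuousLinearMap.hasFDerivAt.hasFDerivWithinAt
  exact hbase.congr_of_eventuallyEq hev (by simpa using hlin x0 ⟨hx0N, hx00⟩)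

/-- chained support Jacobian: under locally-constant-support conditions at
every layer, the Jacobian of `S^{(ℓ₂)}_{:,m}` with respect to `S^{(ℓ₁)}_{:,m}`
(`ℓ₂ = ℓ₁ + t + 1`) has rows indexed by `T^{(ℓ₂)}` equal to `Φ` and zero rows
outside `T^{(ℓ₂)}`. -/
theorem chained_support_jacobian (d : ℕ → ℕ) (hd : ∀ ℓ, d (ℓ + 1) ≤ d ℓ)
    (A : (ℓ : ℕ) → Matrix (Fin (d ℓ)) (Fin (d (ℓ + 1))) ℝ)
    (hA0 : ∀ ℓ i j, 0 ≤ A ℓ i j) (hArank : ∀ ℓ, (A ℓ).rank = d (ℓ + 1))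
    -- a universal NNLS solver
    (Q2 : (a b : ℕ) → (Fin a → Fin b → ℝ) → (Fin a → ℝ) → (Fin b → ℝ))
    (hQ2 : ∀ (a b : ℕ) (B : Fin a → Fin b → ℝ) (y : Fin a → ℝ),
      (∀ i j, 0 ≤ B i j) → (∀ i, 0 ≤ y i) → (Matrix.of B).rank = b →
        IsNNLS (Matrix.of B) y (Q2 a b B y))
    (x : Fin (d 0) → ℝ) (hx0 : ∀ i, 0 ≤ x i)
    -- the layer vectors S^{(ℓ)} and the previous-layer inputs
    (Sv : (ℓ : ℕ) → Fin (d (ℓ + 1)) → ℝ)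
    (prevS : (ℓ : ℕ) → Fin (d ℓ) → ℝ)
    (hprev0 : prevS 0 = x) (hprevS : ∀ ℓ, prevS (ℓ + 1) = Sv ℓ)
    (hSv : ∀ ℓ, Sv ℓ = Q2 (d ℓ) (d (ℓ + 1)) (fun i j => A ℓ i j) (prevS ℓ))
    -- each pair (A^{(ℓ)}, S^{(ℓ-1)}) lies in the locally-constant-support set U
    (hU : ∀ ℓ, ∃ N : Set ((Fin (d ℓ) → Fin (d (ℓ + 1)) → ℝ) × (Fin (d ℓ) → ℝ)),
      IsOpen N ∧ ((fun i j => A ℓ i j), prevS ℓ) ∈ N ∧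
        ∀ p ∈ N, (∀ i j, 0 ≤ p.1 i j) → (∀ i, 0 ≤ p.2 i) →
          (Matrix.of p.1).rank = d (ℓ + 1) →
            {j | 0 < Q2 (d ℓ) (d (ℓ + 1)) p.1 p.2 j} = {j | 0 < Sv ℓ j})
    -- the supports T^{(ℓ)}
    (Ts : (ℓ : ℕ) → Finset (Fin (d (ℓ + 1))))
    (hTs : ∀ ℓ, Ts ℓ = Finset.univ.filter (fun j => 0 < Sv ℓ j))
    (ℓ₁ t : ℕ)
    (J : Matrix (Fin (d (ℓ₁ + t + 2))) (Fin (d (ℓ₁ + 1))) ℝ)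
    (hJ : ∀ j i, J j i =
      if hj : j ∈ Ts (ℓ₁ + t + 1) then Phi A Ts ℓ₁ t ⟨j, hj⟩ i else 0) :
    HasFDerivWithinAt
      (fun y : Fin (d (ℓ₁ + 1)) → ℝ =>
        iter (fun ℓ => Q2 (d ℓ) (d (ℓ + 1)) (fun i j => A ℓ i j)) ℓ₁ (t + 1) y)
      (Matrix.mulVecLin J).toContinuousLinearMap
      {y : Fin (d (ℓ₁ + 1)) → ℝ | ∀ j, 0 ≤ y j} (Sv ℓ₁) := by
  set QA : (ℓ : ℕ) → (Fin (d ℓ) → ℝ) → (Fin (d (ℓ + 1)) → ℝ) :=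
    fun ℓ => Q2 (d ℓ) (d (ℓ + 1)) (fun i j => A ℓ i j) with hQA
  have hrank' : ∀ L, (Matrix.of fun i j => A L i j).rank = d (L + 1) := fun L => hArank L
  have hprevnn : ∀ L, ∀ i, 0 ≤ prevS L i := by
    intro L
    induction L with
    | zero => rw [hprev0]; exact hx0
    | succ L ih =>
      rw [hprevS L, hSv L]
      exact (hQ2 (d L) (d (L + 1)) _ (prevS L) (hA0 L) ih (hrank' L)).1
  have hIsNNLS : ∀ L (y : Fin (d L) → ℝ), (∀ i, 0 ≤ y i) → IsNNLS (A L) y (QA L y) :=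
    fun L y hy => hQ2 (d L) (d (L + 1)) (fun i j => A L i j) y (hA0 L) hy (hrank' L)
  have hQAnn : ∀ L (y : Fin (d L) → ℝ), (∀ i, 0 ≤ y i) → ∀ j, 0 ≤ QA L y j :=
    fun L y hy => (hIsNNLS L y hy).1
  have hiter_val : ∀ t', iter QA ℓ₁ t' (Sv ℓ₁) = Sv (ℓ₁ + t') := by
    intro t'
    induction t' with
    | zero => simp [iter]
    | succ t' ih =>
      simp only [iter]
      rw [ih, show Sv (ℓ₁ + t') = prevS (ℓ₁ + t' + 1) from (hprevS _).symm]
      exact (hSv _).symm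
  have hiter_nn : ∀ t' (y : Fin (d (ℓ₁ + 1)) → ℝ), (∀ j, 0 ≤ y j) →
      ∀ j, 0 ≤ iter QA ℓ₁ t' y j := by
    intro t'
    induction t' with
    | zero => intro y hy; exact hy
    | succ t' ih =>
      intro y hy j
      simp only [iter]
      exact hQAnn (ℓ₁ + t' + 1) _ (ih y hy) j
  have hTmem : ∀ L (j : Fin (d (L + 1))), j ∈ Ts L ↔ 0 < QA L (prevS L) j := by
    intro L j
    rw [hTs L, Finset.mem_filter]
    simp only [Finset.mem_univ, true_and]
    rw [hSv L]
  have hsingle : ∀ L (J1 : Matrix (Fin (d (L + 1))) (Fin (d L)) ℝ),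
      (∀ j i, J1 j i = if hj : j ∈ Ts L then
        pinv ((A L).submatrix id (Subtype.val : {j // j ∈ Ts L} → Fin (d (L + 1))))
          ⟨j, hj⟩ i else 0) →
      HasFDerivWithinAt (QA L) (Matrix.mulVecLin J1).toContinuousLinearMap
        {y : Fin (d L) → ℝ | ∀ i, 0 ≤ y i} (prevS L) := by
    intro L J1 hJ1
    obtain ⟨N, hNopen, hNmem, hNsupp⟩ := hU L
    apply single_layer (A L) (hArank L) (QA L) (fun y hy => hIsNNLS L y hy) (prevS L)
      (hprevnn L) (Ts L) (hTmem L)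
      {y | ((fun i j => A L i j), y) ∈ N}
      (hNopen.preimage (Continuous.prodMk_right _)) hNmem ?_ J1 hJ1
    intro y hyN hy0
    have := hNsupp ((fun i j => A L i j), y) hyN (hA0 L) hy0 (hrank' L)
    rw [this]
    have : Sv L = QA L (prevS L) := hSv L
    rw [this]
  have main : ∀ t' (J' : Matrix (Fin (d (ℓ₁ + t' + 2))) (Fin (d (ℓ₁ + 1))) ℝ),
      (∀ j i, J' j i = if hj : j ∈ Ts (ℓ₁ + t' + 1) then Phi A Ts ℓ₁ t' ⟨j, hj⟩ i else 0) →
      HasFDerivWithinAt (fun y : Fin (d (ℓ₁ + 1)) → ℝ => iter QA ℓ₁ (t' + 1) y)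
        (Matrix.mulVecLin J').toContinuousLinearMap
        {y : Fin (d (ℓ₁ + 1)) → ℝ | ∀ j, 0 ≤ y j} (Sv ℓ₁) := by
    intro t'
    induction t' with
    | zero =>
      intro J' hJ'
      have heq : (fun y : Fin (d (ℓ₁ + 1)) → ℝ => iter QA ℓ₁ (0 + 1) y) = QA (ℓ₁ + 1) := by
        funext y; simp [iter]
      rw [heq, show Sv ℓ₁ = prevS (ℓ₁ + 1) from (hprevS ℓ₁).symm]
      apply hsingle (ℓ₁ + 1) J'
      intro j i
      rw [hJ' j i]
      by_cases hj : j ∈ Ts (ℓ₁ + 1) <;> simp [hj, Phi]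
    | succ t' ih =>
      intro J' hJ'
      set Jt : Matrix (Fin (d (ℓ₁ + t' + 2))) (Fin (d (ℓ₁ + 1))) ℝ :=
        Matrix.of fun j i =>
          if hj : j ∈ Ts (ℓ₁ + t' + 1) then Phi A Ts ℓ₁ t' ⟨j, hj⟩ i else 0 with hJt
      have hinner := ih Jt (fun j i => rfl)
      set J1 : Matrix (Fin (d (ℓ₁ + t' + 3))) (Fin (d (ℓ₁ + t' + 2))) ℝ :=
        Matrix.of fun j i =>
          if hj : j ∈ Ts (ℓ₁ + t' + 2) then
            pinv ((A (ℓ₁ + t' + 2)).submatrix id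
              (Subtype.val : {j // j ∈ Ts (ℓ₁ + t' + 2)} → Fin (d (ℓ₁ + t' + 3))))
              ⟨j, hj⟩ i else 0 with hJ1
      have houter := hsingle (ℓ₁ + t' + 2) J1 (fun j i => rfl)
      have hpt : prevS (ℓ₁ + t' + 2) = iter QA ℓ₁ (t' + 1) (Sv ℓ₁) := by
        rw [hiter_val (t' + 1), hprevS]
        rfl
      rw [hpt] at houter
      have hmaps : Set.MapsTo (fun y : Fin (d (ℓ₁ + 1)) → ℝ => iter QA ℓ₁ (t' + 1) y)
          {y : Fin (d (ℓ₁ + 1)) → ℝ | ∀ j, 0 ≤ y j}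
          {y : Fin (d (ℓ₁ + t' + 2)) → ℝ | ∀ i, 0 ≤ y i} :=
        fun y hy => hiter_nn (t' + 1) y hy
      have hcomp := HasFDerivWithinAt.comp (Sv ℓ₁) houter hinner hmaps
      have hfun : (QA (ℓ₁ + t' + 2) ∘ fun y : Fin (d (ℓ₁ + 1)) → ℝ => iter QA ℓ₁ (t' + 1) y)
          = (fun y : Fin (d (ℓ₁ + 1)) → ℝ => iter QA ℓ₁ (t' + 1 + 1) y) := by
        funext y
        simp only [Function.comp_apply, iter]
        rfl
      rw [hfun] at hcomp
      have hmat : J' = J1 * Jt := by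
        ext j i
        rw [hJ' j i, Matrix.mul_apply]
        by_cases hj : j ∈ Ts (ℓ₁ + (t' + 1) + 1)
        · have hj2 : j ∈ Ts (ℓ₁ + t' + 2) := hj
          rw [dif_pos hj]
          have h1 : ∑ k, J1 j k * Jt k i = ∑ k ∈ Ts (ℓ₁ + t' + 1), J1 j k * Jt k i :=
            (Finset.sum_subset (Finset.subset_univ _)
              (fun k _ hk => by simp [hJt, hk])).symm
          rw [h1, ← Finset.sum_coe_sort]
          show Phi A Ts ℓ₁ (t' + 1) ⟨j, hj⟩ i = _
          rw [Phi, Matrix.mul_apply]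
          apply Finset.sum_congr rfl
          intro k _
          simp only [Matrix.submatrix_apply, id, hJt, hJ1, Matrix.of_apply]
          rw [dif_pos hj2, dif_pos k.2]
        · have hj2 : j ∉ Ts (ℓ₁ + t' + 2) := hj
          rw [dif_neg hj]
          symm
          apply Finset.sum_eq_zero
          intro k _
          simp [hJ1, hj2]
      have hder : (Matrix.mulVecLin J1).toContinuousLinearMap.comp
          (Matrix.mulVecLin Jt).toContinuousLinearMap
          = (Matrix.mulVecLin J').toContinuousLinearMap := by
        apply ContinuousLinearMap.ext
        intro y
        rw [hmat]
        show J1.mulVec (Jt.mulVec y) = (J1 * Jt).mulVec y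
        rw [Matrix.mulVec_mulVec]
      rw [hder] at hcomp
      exact hcomp
  exact main t J hJ
end
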